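/- Let A and E be n×n real symmetric matrices, let λ ∈ ℝ with a unit vector u satisfying A ·ᵥ u = λ • u, and suppose every eigenvalue μ of A admitting an eigenvector orthogonal to u satisfies |μ − λ| ≥ δ for some δ > 0. If the ℓ²-operator norm satisfies ‖E‖ ≤ ε with 2ε < δ, then A + E has a unit eigenvector û whose eigenvalue λ̂ satisfies |λ̂ − λ| ≤ ε, and the angle between û and u satisfies √(1 − ⟨u, û⟩²) ≤ 2ε/δ; in particular min_{σ ∈ {−1,1}} ‖û − σ • u‖ ≤ 2√2 · ε/δ. -/

import Mathlib

open Matrix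

attribute [local instance] Matrix.instL2OpNormedAddCommGroup

open scoped RealInnerProductSpace

attribute [local instance] Matrix.instL2OpNormedAddCommGroup

def toE {n : ℕ} (x : Fin n → ℝ) : EuclideanSpace ℝ (Fin n) := WithLp.toLp 2 x

variable {n : ℕ}

lemma toE_inner (x y : Fin n → ℝ) : ⟪toE x, toE y⟫ = ∑ i, x i * y i := by
  simp [toE, PiLp.inner_apply, RCLike.inner_apply]
  exact Finset.sum_congr rfl fun i _ => mul_comm _ _

lemma toE_norm_sq (x : Fin n → ℝ) : ‖toE x‖ ^ 2 = ∑ i, x i ^ 2 := by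
  rw [EuclideanSpace.norm_eq, Real.sq_sqrt (by positivity)]
  simp [toE, sq_abs]

lemma sym_dot (M : Matrix (Fin n) (Fin n) ℝ) (hM : M.IsSymm) (x y : Fin n → ℝ) :
    ∑ i, (M *ᵥ x) i * y i = ∑ i, x i * (M *ᵥ y) i := by
  have h1 : (M *ᵥ x) ⬝ᵥ y = x ⬝ᵥ (M *ᵥ y) := by
    rw [Matrix.dotProduct_mulVec, ← Matrix.mulVec_transpose, hM.eq]
  simpa [dotProduct] using h1

lemma opnorm_bound (M : Matrix (Fin n) (Fin n) ℝ) (x : Fin n → ℝ) :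
    ‖toE (M *ᵥ x)‖ ≤ ‖M‖ * ‖toE x‖ :=
  Matrix.l2_opNorm_mulVec M (toE x)

lemma parseval (b : OrthonormalBasis (Fin n) ℝ (EuclideanSpace ℝ (Fin n))) (x : Fin n → ℝ) :
    ∑ k, (∑ i, b k i * x i) ^ 2 = ∑ i, x i ^ 2 := by
  have h2 : ∑ i, x i ^ 2 = ‖toE x‖ ^ 2 := (toE_norm_sq x).symm
  rw [h2, ← b.repr.norm_map (toE x), EuclideanSpace.norm_eq,
    Real.sq_sqrt (by positivity)]
  refine Finset.sum_congr rfl fun k _ => ?_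
  rw [Real.norm_eq_abs, sq_abs, b.repr_apply_apply]
  have : ⟪b k, toE x⟫ = ∑ i, b k i * x i := toE_inner _ _
  rw [this]

lemma eig_expand (M : Matrix (Fin n) (Fin n) ℝ) (hM : M.IsHermitian) (hMs : M.IsSymm)
    (t : ℝ) (x : Fin n → ℝ) :
    ‖toE (M *ᵥ x) - t • toE x‖ ^ 2
      = ∑ k, (hM.eigenvalues k - t) ^ 2 * (∑ i, hM.eigenvectorBasis k i * x i) ^ 2 := by
  set b := hM.eigenvectorBasis with hb
  have hrepr : ∀ k, b.repr (toE (M *ᵥ x) - t • toE x) k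
      = (hM.eigenvalues k - t) * (∑ i, b k i * x i) := by
    intro k
    rw [map_sub, _root_.map_smul]
    simp only [PiLp.sub_apply, PiLp.smul_apply, smul_eq_mul]
    rw [b.repr_apply_apply, b.repr_apply_apply]
    have h1 : ⟪b k, toE (M *ᵥ x)⟫ = hM.eigenvalues k * (∑ i, b k i * x i) := by
      have h2 : ⟪b k, toE (M *ᵥ x)⟫ = ∑ i, (b k) i * (M *ᵥ x) i := toE_inner _ _
      have h3 : ∑ i, (b k) i * (M *ᵥ x) i = ∑ i, (M *ᵥ ⇑(b k)) i * x i :=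
        (sym_dot M hMs (⇑(b k)) x).symm
      rw [h2, h3, hM.mulVec_eigenvectorBasis k, Finset.mul_sum]
      refine Finset.sum_congr rfl fun i _ => ?_
      simp [mul_assoc, hb]
    have h4 : ⟪b k, toE x⟫ = ∑ i, b k i * x i := toE_inner _ _
    rw [h1, h4]
    ring
  rw [← b.repr.norm_map (toE (M *ᵥ x) - t • toE x), EuclideanSpace.norm_eq,
    Real.sq_sqrt (by positivity)]
  refine Finset.sum_congr rfl fun k _ => ?_
  rw [Real.norm_eq_abs, sq_abs, hrepr k, mul_pow]


lemma norm_toE_one {n : ℕ} {x : Fin n → ℝ} (h : ∑ i, x i ^ 2 = 1) : ‖toE x‖ = 1 := by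
  have h1 : ‖toE x‖ ^ 2 = 1 := by rw [toE_norm_sq]; exact h
  have h0 := norm_nonneg (toE x)
  have h3 : (‖toE x‖ - 1) * (‖toE x‖ + 1) = 0 := by nlinarith
  rcases mul_eq_zero.mp h3 with h | h
  · linarith
  · linarith

lemma sum_smul_dot (u z : Fin n → ℝ) (t : ℝ) :
    ∑ i, u i * (t • z) i = t * ∑ i, u i * z i := by
  rw [Finset.mul_sum]
  exact Finset.sum_congr rfl fun i _ => by
    simp only [Pi.smul_apply, smul_eq_mul]; ring

lemma sum_smul_dot' (u z : Fin n → ℝ) (t : ℝ) :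
    ∑ i, (t • u) i * z i = t * ∑ i, u i * z i := by
  rw [Finset.mul_sum]
  exact Finset.sum_congr rfl fun i _ => by
    simp only [Pi.smul_apply, smul_eq_mul]; ring

lemma sum_dot_sub_smul (u z : Fin n → ℝ) (s : ℝ) :
    ∑ i, u i * (z - s • u) i = (∑ i, u i * z i) - s * ∑ i, u i ^ 2 := by
  rw [Finset.mul_sum, ← Finset.sum_sub_distrib]
  exact Finset.sum_congr rfl fun i _ => by
    simp only [Pi.sub_apply, Pi.smul_apply, smul_eq_mul]; ring

lemma sum_sq_sub_smul (u z : Fin n → ℝ) (s : ℝ) :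
    ∑ i, ((z - s • u) i) ^ 2
      = (∑ i, z i ^ 2) - 2 * s * (∑ i, u i * z i) + s ^ 2 * ∑ i, u i ^ 2 := by
  rw [Finset.mul_sum, Finset.mul_sum, ← Finset.sum_sub_distrib, ← Finset.sum_add_distrib]
  exact Finset.sum_congr rfl fun i _ => by
    simp only [Pi.sub_apply, Pi.smul_apply, smul_eq_mul]; ring

lemma sum_sq_sub' (u z : Fin n → ℝ) (s : ℝ) :
    ∑ i, (z i - s * u i) ^ 2
      = (∑ i, z i ^ 2) - 2 * s * (∑ i, u i * z i) + s ^ 2 * ∑ i, u i ^ 2 := by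
  rw [Finset.mul_sum, Finset.mul_sum, ← Finset.sum_sub_distrib, ← Finset.sum_add_distrib]
  exact Finset.sum_congr rfl fun i _ => by ring

lemma sum_sq_add' (u z : Fin n → ℝ) :
    ∑ i, (z i + u i) ^ 2
      = (∑ i, z i ^ 2) + 2 * (∑ i, u i * z i) + ∑ i, u i ^ 2 := by
  rw [Finset.mul_sum, ← Finset.sum_add_distrib, ← Finset.sum_add_distrib]
  exact Finset.sum_congr rfl fun i _ => by ring

lemma sum_dot_add (u p q : Fin n → ℝ) :
    ∑ i, u i * (p + q) i = (∑ i, u i * p i) + ∑ i, u i * q i := by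
  rw [← Finset.sum_add_distrib]
  exact Finset.sum_congr rfl fun i _ => by
    simp only [Pi.add_apply]; ring

set_option maxHeartbeats 1600000 in
/-- Davis–Kahan-type eigenvector perturbation bound: if `u` is a unit
`λ`-eigenvector of the symmetric matrix `A`, all other eigendirections are at
spectral distance `≥ δ` from `λ`, and `‖E‖ ≤ ε` (ℓ² operator norm) with
`2ε < δ`, then `A + E` has a unit eigenvector `û` with eigenvalue `λ̂`
satisfying `|λ̂ - λ| ≤ ε`, `sin∠(û,u) ≤ 2ε/δ`, and
`min_{σ = ±1} ‖û - σu‖ ≤ 2√2 ε/δ`. -/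
theorem stmt12 (n : ℕ) (A E : Matrix (Fin n) (Fin n) ℝ)
    (hA : A.IsSymm) (hE : E.IsSymm)
    (lam : ℝ) (u : Fin n → ℝ) (hu : ∑ i, u i ^ 2 = 1)
    (hAu : A *ᵥ u = lam • u)
    (δ : ℝ) (hδ : 0 < δ)
    (hgap : ∀ (μ : ℝ) (v : Fin n → ℝ), v ≠ 0 → A *ᵥ v = μ • v →
      (∑ i, u i * v i) = 0 → δ ≤ |μ - lam|)
    (ε : ℝ) (hEnorm : ‖E‖ ≤ ε) (hεδ : 2 * ε < δ) :
    ∃ (uhat : Fin n → ℝ) (lamhat : ℝ),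
      (∑ i, uhat i ^ 2 = 1) ∧
      (A + E) *ᵥ uhat = lamhat • uhat ∧
      |lamhat - lam| ≤ ε ∧
      Real.sqrt (1 - (∑ i, u i * uhat i) ^ 2) ≤ 2 * ε / δ ∧
      min (Real.sqrt (∑ i, (uhat i - u i) ^ 2))
          (Real.sqrt (∑ i, (uhat i + u i) ^ 2)) ≤ 2 * Real.sqrt 2 * ε / δ := by
  have hε0 : 0 ≤ ε := le_trans (norm_nonneg E) hEnorm
  have hδε : 0 < δ - ε := by linarith
  have hA' : A.IsHermitian := by
    show Aᴴ = A; rw [Matrix.conjTranspose_eq_transpose_of_trivial]; exact hA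
  have hBs : (A + E).IsSymm := hA.add hE
  have hB' : (A + E).IsHermitian := by
    show (A + E)ᴴ = A + E
    rw [Matrix.conjTranspose_eq_transpose_of_trivial]; exact hBs
  set b := hB'.eigenvectorBasis with hbdef
  set μ := hB'.eigenvalues with hμdef
  -- norm of u
  have hnu : ‖toE u‖ = 1 := by
    have h1 : ‖toE u‖ ^ 2 = 1 := by rw [toE_norm_sq]; exact hu
    have h0 := norm_nonneg (toE u)
    have h3 : (‖toE u‖ - 1) * (‖toE u‖ + 1) = 0 := by nlinarith
    rcases mul_eq_zero.mp h3 with h | h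
    · linarith
    · linarith
  -- residual of u for A + E
  have hres : ‖toE ((A + E) *ᵥ u) - lam • toE u‖ ≤ ε := by
    have hfun : ((A + E) *ᵥ u) - lam • u = E *ᵥ u := by
      rw [Matrix.add_mulVec, hAu]; abel
    have h1 : toE ((A + E) *ᵥ u) - lam • toE u = toE (E *ᵥ u) := congrArg toE hfun
    rw [h1]
    calc ‖toE (E *ᵥ u)‖ ≤ ‖E‖ * ‖toE u‖ := opnorm_bound E u
      _ = ‖E‖ := by rw [hnu, mul_one]
      _ ≤ ε := hEnorm
  have hsum1 : ∑ k, (μ k - lam) ^ 2 * (∑ i, b k i * u i) ^ 2 ≤ ε ^ 2 := by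
    rw [← eig_expand (A + E) hB' hBs lam u]
    exact pow_le_pow_left₀ (norm_nonneg _) hres 2
  have hpar : ∑ k, (∑ i, b k i * u i) ^ 2 = 1 := by rw [parseval b u, hu]
  -- find the close eigenvalue
  obtain ⟨j, hj⟩ : ∃ j, |μ j - lam| ≤ ε := by
    by_contra hcon
    push_neg at hcon
    obtain ⟨j0, hj0⟩ : ∃ j0, (∑ i, b j0 i * u i) ^ 2 ≠ 0 := by
      by_contra hc
      push_neg at hc
      rw [Finset.sum_eq_zero (fun k _ => hc k)] at hpar
      norm_num at hpar
    have hlt : ε ^ 2 < ∑ k, (μ k - lam) ^ 2 * (∑ i, b k i * u i) ^ 2 := by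
      have h1 : ε ^ 2 = ∑ k, ε ^ 2 * (∑ i, b k i * u i) ^ 2 := by
        rw [← Finset.mul_sum, hpar, mul_one]
      rw [h1]
      refine Finset.sum_lt_sum (fun k _ => ?_) ⟨j0, Finset.mem_univ j0, ?_⟩
      · refine mul_le_mul_of_nonneg_right ?_ (sq_nonneg _)
        have := hcon k
        nlinarith [abs_nonneg (μ k - lam), sq_abs (μ k - lam)]
      · refine mul_lt_mul_of_pos_right ?_ ?_
        · have := hcon j0
          nlinarith [abs_nonneg (μ j0 - lam), sq_abs (μ j0 - lam)]
        · exact lt_of_le_of_ne (sq_nonneg _) (Ne.symm hj0)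
    linarith
  -- the eigenvector
  set v : Fin n → ℝ := ⇑(b j) with hvdef
  have hv2 : ∑ i, v i ^ 2 = 1 := by
    have h1 : ‖toE v‖ = 1 := b.orthonormal.1 j
    rw [← toE_norm_sq, h1, one_pow]
  set lamhat := μ j with hlhdef
  have hBv : (A + E) *ᵥ v = lamhat • v := hB'.mulVec_eigenvectorBasis j
  set c : ℝ := ∑ i, u i * v i with hcdef
  -- the orthogonal complement part
  set y : Fin n → ℝ := v - c • u with hydef
  have hyi : ∀ i, y i = v i - c * u i := fun i => rfl
  have hyu : ∑ i, u i * y i = 0 := by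
    rw [hydef, sum_dot_sub_smul, hu, ← hcdef]; ring
  have hy2 : ∑ i, y i ^ 2 = 1 - c ^ 2 := by
    rw [hydef, sum_sq_sub_smul, hv2, hu, ← hcdef]; ring
  have hc1 : c ^ 2 ≤ 1 := by
    have h1 : 0 ≤ ∑ i, y i ^ 2 := Finset.sum_nonneg fun i _ => sq_nonneg _
    linarith [hy2]
  -- A on v
  have hAv : A *ᵥ v = lamhat • v - E *ᵥ v := by
    have h1 : A *ᵥ v + E *ᵥ v = lamhat • v := by rw [← Matrix.add_mulVec]; exact hBv
    have := eq_sub_of_add_eq h1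
    exact this
  -- inner product of u with E v
  have he : ∑ i, u i * (E *ᵥ v) i = (lamhat - lam) * c := by
    have h1 : ∑ i, u i * ((A + E) *ᵥ v) i = lamhat * c := by
      rw [hBv, sum_smul_dot, ← hcdef]
    have h2 : ∑ i, u i * (A *ᵥ v) i = lam * c := by
      rw [← sym_dot A hA u v, hAu, sum_smul_dot', ← hcdef]
    have h3 : ∑ i, u i * ((A + E) *ᵥ v) i
        = (∑ i, u i * (A *ᵥ v) i) + ∑ i, u i * (E *ᵥ v) i := by
      rw [Matrix.add_mulVec, sum_dot_add]
    linear_combination h1 - h2 - h3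
  -- the residual of y
  set g : Fin n → ℝ := A *ᵥ y - lamhat • y with hgdef
  have hgi : ∀ i, g i = -((E *ᵥ v) i) - (c * (lam - lamhat)) * u i := by
    intro i
    have h1 : A *ᵥ y = (lamhat • v - E *ᵥ v) - c • (lam • u) := by
      rw [hydef, Matrix.mulVec_sub, Matrix.mulVec_smul, hAv, hAu]
    have h2 : g = ((lamhat • v - E *ᵥ v) - c • (lam • u)) - lamhat • y := by
      rw [hgdef, h1]
    rw [h2]
    simp only [Pi.sub_apply, Pi.smul_apply, smul_eq_mul, hyi i]
    ring
  have hEv : ∑ i, (E *ᵥ v) i ^ 2 ≤ ε ^ 2 := by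
    have h1 : ‖toE (E *ᵥ v)‖ ≤ ε := by
      have hnv : ‖toE v‖ = 1 := norm_toE_one hv2
      calc ‖toE (E *ᵥ v)‖ ≤ ‖E‖ * ‖toE v‖ := opnorm_bound E v
        _ = ‖E‖ := by rw [hnv, mul_one]
        _ ≤ ε := hEnorm
    rw [← toE_norm_sq]
    exact pow_le_pow_left₀ (norm_nonneg _) h1 2
  have hgnorm : ∑ i, g i ^ 2 ≤ ε ^ 2 := by
    have hexp : ∑ i, g i ^ 2
        = (∑ i, (E *ᵥ v) i ^ 2) + 2 * (c * (lam - lamhat)) * (∑ i, u i * (E *ᵥ v) i)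
          + (c * (lam - lamhat)) ^ 2 * ∑ i, u i ^ 2 := by
      rw [Finset.mul_sum, Finset.mul_sum, ← Finset.sum_add_distrib, ← Finset.sum_add_distrib]
      refine Finset.sum_congr rfl fun i _ => ?_
      rw [hgi i]; ring
    rw [hexp, he, hu]
    nlinarith [hEv, sq_nonneg (c * (lam - lamhat))]
  -- the gap lower bound
  set w := hA'.eigenvectorBasis with hwdef
  set ν := hA'.eigenvalues with hνdef
  have hk : ∀ k, (∑ i, w k i * y i) = 0 ∨ δ ≤ |ν k - lam| := by
    intro k
    by_cases h0 : ∑ i, u i * w k i = 0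
    · right
      refine hgap (ν k) (⇑(w k)) ?_ (hA'.mulVec_eigenvectorBasis k) h0
      intro hz
      exact w.orthonormal.ne_zero k (by ext i; exact congrFun hz i)
    · left
      have hAw : A *ᵥ ⇑(w k) = ν k • ⇑(w k) := hA'.mulVec_eigenvectorBasis k
      have h1 : ν k * (∑ i, u i * w k i) = lam * (∑ i, u i * w k i) := by
        have ha : ∑ i, u i * (A *ᵥ ⇑(w k)) i = ν k * ∑ i, u i * w k i := by
          rw [hAw, sum_smul_dot]
        have hb2 : ∑ i, u i * (A *ᵥ ⇑(w k)) i = lam * ∑ i, u i * w k i := by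
          rw [← sym_dot A hA u (⇑(w k)), hAu, sum_smul_dot']
        rw [← ha, hb2]
      have hνk : ν k = lam := mul_right_cancel₀ h0 h1
      set s : ℝ := ∑ i, u i * w k i with hsdef
      have hz : A *ᵥ (⇑(w k) - s • u) = lam • (⇑(w k) - s • u) := by
        rw [Matrix.mulVec_sub, Matrix.mulVec_smul, hAw, hAu, hνk]
        funext i
        simp only [Pi.sub_apply, Pi.smul_apply, smul_eq_mul]
        ring
      have hzu : ∑ i, u i * (⇑(w k) - s • u) i = 0 := by
        rw [sum_dot_sub_smul, hu]
        have hss : ∑ i, u i * ⇑(w k) i = s := rfl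
        rw [hss]; ring
      have hz0 : ⇑(w k) - s • u = 0 := by
        by_contra hne
        have := hgap lam _ hne hz hzu
        simp only [sub_self, abs_zero] at this
        linarith
      have hwk : ∀ i, w k i = s * u i := by
        intro i
        have h3 := congrFun hz0 i
        simp only [Pi.sub_apply, Pi.smul_apply, smul_eq_mul, Pi.zero_apply, sub_eq_zero] at h3
        exact h3
      calc ∑ i, w k i * y i = s * ∑ i, u i * y i := by
            rw [Finset.mul_sum]
            refine Finset.sum_congr rfl fun i _ => ?_
            rw [hwk i]; ring
        _ = 0 := by rw [hyu, mul_zero]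
  have hlow : (δ - ε) ^ 2 * (1 - c ^ 2) ≤ ∑ i, g i ^ 2 := by
    have hexp := eig_expand A hA' hA lamhat y
    have hL : ‖toE (A *ᵥ y) - lamhat • toE y‖ ^ 2 = ∑ i, g i ^ 2 := by
      have h1 : toE (A *ᵥ y) - lamhat • toE y = toE g := rfl
      rw [h1, toE_norm_sq]
    rw [hL] at hexp
    rw [hexp]
    have hy2' : ∑ k, (∑ i, w k i * y i) ^ 2 = 1 - c ^ 2 := by
      rw [parseval w y, hy2]
    rw [← hy2', Finset.mul_sum]
    refine Finset.sum_le_sum fun k _ => ?_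
    rcases hk k with h | h
    · rw [h]; simp
    · have h2 : δ - ε ≤ |ν k - lamhat| := by
        have htri : |ν k - lam| ≤ |ν k - lamhat| + |lamhat - lam| := abs_sub_le _ _ _
        linarith
      have h3 : (δ - ε) ^ 2 ≤ (ν k - lamhat) ^ 2 := by
        rw [← sq_abs (ν k - lamhat)]
        exact pow_le_pow_left₀ (le_of_lt hδε) h2 2
      exact mul_le_mul_of_nonneg_right h3 (sq_nonneg _)
  -- combine
  have hc0 : 0 ≤ 1 - c ^ 2 := by linarith
  have hmain : δ ^ 2 * (1 - c ^ 2) ≤ 4 * ε ^ 2 := by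
    have hdd : δ ^ 2 ≤ 4 * (δ - ε) ^ 2 := by nlinarith [hδ, hδε, hε0]
    have h4 := mul_le_mul_of_nonneg_right hdd hc0
    calc δ ^ 2 * (1 - c ^ 2) ≤ 4 * (δ - ε) ^ 2 * (1 - c ^ 2) := h4
      _ ≤ 4 * ε ^ 2 := by linarith [hlow, hgnorm]
  have h1c : 1 - c ^ 2 ≤ 4 * ε ^ 2 / δ ^ 2 := by
    rw [le_div_iff₀ (by positivity)]
    linarith [hmain]
  refine ⟨v, lamhat, hv2, hBv, hj, ?_, ?_⟩
  · -- sqrt bound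
    rw [← hcdef]
    have hfrac : (0:ℝ) ≤ 2 * ε / δ := by positivity
    rw [show (2 * ε / δ) = Real.sqrt ((2 * ε / δ) ^ 2) from (Real.sqrt_sq hfrac).symm]
    apply Real.sqrt_le_sqrt
    rw [div_pow]
    calc 1 - c ^ 2 ≤ 4 * ε ^ 2 / δ ^ 2 := h1c
      _ = (2 * ε) ^ 2 / δ ^ 2 := by ring
  · -- min bound
    have hR0 : 0 ≤ 2 * Real.sqrt 2 * ε / δ :=
      div_nonneg (mul_nonneg (mul_nonneg (by norm_num) (Real.sqrt_nonneg 2)) hε0) (le_of_lt hδ)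
    have hR2 : (2 * Real.sqrt 2 * ε / δ) ^ 2 = 8 * ε ^ 2 / δ ^ 2 := by
      rw [div_pow, mul_pow, mul_pow, Real.sq_sqrt (by norm_num : (0:ℝ) ≤ 2)]
      norm_num
    have hsub : ∑ i, (v i - u i) ^ 2 = 2 - 2 * c := by
      have h0 : ∑ i, (v i - u i) ^ 2 = ∑ i, (v i - (1:ℝ) * u i) ^ 2 :=
        Finset.sum_congr rfl fun i _ => by ring
      rw [h0, sum_sq_sub', hv2, hu, ← hcdef]; ring
    have hadd : ∑ i, (v i + u i) ^ 2 = 2 + 2 * c := by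
      rw [sum_sq_add', hv2, hu, ← hcdef]; ring
    have hcle1 : c ≤ 1 := by nlinarith [hc1, sq_nonneg (c - 1)]
    have hcge1 : -1 ≤ c := by nlinarith [hc1, sq_nonneg (c + 1)]
    rcases le_or_gt 0 c with hc | hc
    · refine le_trans (min_le_left _ _) ?_
      rw [hsub, show (2 * Real.sqrt 2 * ε / δ)
          = Real.sqrt ((2 * Real.sqrt 2 * ε / δ) ^ 2) from (Real.sqrt_sq hR0).symm]
      apply Real.sqrt_le_sqrt
      rw [hR2, le_div_iff₀ (by positivity)]
      have h5 : 0 ≤ 2 * c * (1 - c) * δ ^ 2 :=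
        mul_nonneg (mul_nonneg (mul_nonneg (by norm_num) hc) (by linarith)) (sq_nonneg δ)
      nlinarith [hmain]
    · refine le_trans (min_le_right _ _) ?_
      rw [hadd, show (2 * Real.sqrt 2 * ε / δ)
          = Real.sqrt ((2 * Real.sqrt 2 * ε / δ) ^ 2) from (Real.sqrt_sq hR0).symm]
      apply Real.sqrt_le_sqrt
      rw [hR2, le_div_iff₀ (by positivity)]
      have h5 : 0 ≤ 2 * (-c) * (1 + c) * δ ^ 2 :=
        mul_nonneg (mul_nonneg (mul_nonneg (by norm_num) (by linarith)) (by linarith)) (sq_nonneg δ)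
      nlinarith [hmain]
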